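/- For a symmetric friend-oriented hedonic game with k = 1, if there exists a CIS-robust partition, then for every player j in R_w (players outside P_w with no friend outside P_w, having neither exactly one friend outside P_w nor two friends outside P_w ∪ S_w), j has no friend at all, i.e., j is an isolated vertex of the friendship graph. -/

import Mathlib

open Finset

section HedonicDefs

variable {α : Type*} [DecidableEq α] [Fintype α]

/-- Additive utility of player `i` in coalition `S`. -/
def util (w : α → α → ℤ) (S : Finset α) (i : α) : ℤ := ∑ j ∈ S, w i j

/-- `π` is a partition of the player set `V`: every player of `V` lies in its own
coalition, coalitions are contained in `V`, and membership determines the coalition. -/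
def IsPartition (V : Finset α) (π : α → Finset α) : Prop :=
  (∀ i ∈ V, i ∈ π i ∧ π i ⊆ V) ∧ ∀ i ∈ V, ∀ j ∈ π i, π j = π i

/-- `S` is a coalition of the partition `π` on `V`, or the empty coalition. -/
def IsCoalitionOf (V : Finset α) (π : α → Finset α) (S : Finset α) : Prop :=
  S = ∅ ∨ ∃ j ∈ V, S = π j

/-- Player `i` has an NS-deviation from `π i` to `S`. -/
def NSDev (w : α → α → ℤ) (V : Finset α) (π : α → Finset α) (i : α) (S : Finset α) : Prop :=
  IsCoalitionOf V π S ∧ S ≠ π i ∧ i ∉ S ∧ util w (π i) i < util w (insert i S) i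

/-- Player `i` has an IS-deviation from `π i` to `S`: an NS-deviation accepted by
all members of the target coalition `S`. -/
def ISDev (w : α → α → ℤ) (V : Finset α) (π : α → Finset α) (i : α) (S : Finset α) : Prop :=
  NSDev w V π i S ∧ ∀ j ∈ S, util w S j ≤ util w (insert i S) j

/-- Player `i` has a CIS-deviation from `π i` to `S`: an IS-deviation also accepted by
all members of the abandoned coalition. -/
def CISDev (w : α → α → ℤ) (V : Finset α) (π : α → Finset α) (i : α) (S : Finset α) : Prop :=
  ISDev w V π i S ∧ ∀ j ∈ (π i).erase i, util w (π i) j ≤ util w ((π i).erase i) j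

def NashStable (w : α → α → ℤ) (V : Finset α) (π : α → Finset α) : Prop :=
  ∀ i ∈ V, ∀ S : Finset α, ¬ NSDev w V π i S

def IndStable (w : α → α → ℤ) (V : Finset α) (π : α → Finset α) : Prop :=
  ∀ i ∈ V, ∀ S : Finset α, ¬ ISDev w V π i S

def CIStable (w : α → α → ℤ) (V : Finset α) (π : α → Finset α) : Prop :=
  ∀ i ∈ V, ∀ S : Finset α, ¬ CISDev w V π i S

/-- Individual rationality: each player weakly prefers its coalition to being alone
(being alone gives utility `w i i = 0`). -/
def IndRational (w : α → α → ℤ) (V : Finset α) (π : α → Finset α) : Prop :=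
  ∀ i ∈ V, 0 ≤ util w (π i) i

/-- Core stability: no nonempty coalition strongly blocks `π`. -/
def CoreStable (w : α → α → ℤ) (V : Finset α) (π : α → Finset α) : Prop :=
  ¬ ∃ S : Finset α, S ⊆ V ∧ S.Nonempty ∧ ∀ i ∈ S, util w (π i) i < util w S i

/-- `π` is robust for the stability notion `St` under deletion of at most `k` players:
`π` satisfies `St` and so does its truncation after removing any `X` with `|X| ≤ k`. -/
def Robust (St : Finset α → (α → Finset α) → Prop) (V : Finset α)
    (π : α → Finset α) (k : ℕ) : Prop :=
  St V π ∧ ∀ X ⊆ V, X.card ≤ k → St (V \ X) (fun i => π i \ X)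

/-- Symmetric friend-oriented game: symmetric weights, zero on the diagonal, and each
off-diagonal weight equals `n` (friends) or `-1` (enemies), where `n` is the number of players. -/
def FriendOriented (w : α → α → ℤ) : Prop :=
  (∀ i j : α, w i j = w j i) ∧ (∀ i : α, w i i = 0) ∧
    ∀ i j : α, i ≠ j → w i j = (Fintype.card α : ℤ) ∨ w i j = -1

/-- `j` is a friend of `i`. -/
def Friend (w : α → α → ℤ) (i j : α) : Prop := i ≠ j ∧ 0 < w i j


instance (w : α → α → ℤ) (i j : α) : Decidable (Friend w i j) :=
  inferInstanceAs (Decidable (_ ∧ _))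

/-- `S` is a clique of the friendship graph. -/
def IsClique (w : α → α → ℤ) (S : Finset α) : Prop :=
  ∀ i ∈ S, ∀ j ∈ S, i ≠ j → Friend w i j

/-- Two players lie in the same connected component of the friendship graph. -/
def SameComp (w : α → α → ℤ) : α → α → Prop :=
  Relation.ReflTransGen (fun a b => Friend w a b)

/-- The connected component of `v` in the friendship graph, as a set. -/
def comp (w : α → α → ℤ) (v : α) : Set α := {u | SameComp w v u}

end HedonicDefs
section ElimDefs

variable {α : Type*} [DecidableEq α] [Fintype α]

/-- Friendship within the subgame on vertex set `V`. -/
def FriendIn (w : α → α → ℤ) (V : Set α) (i j : α) : Prop :=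
  i ∈ V ∧ j ∈ V ∧ Friend w i j

/-- `j` is the unique friend of `i` in the subgraph induced by `V`. -/
def UniqueFriendIn (w : α → α → ℤ) (V : Set α) (i j : α) : Prop :=
  FriendIn w V i j ∧ ∀ l : α, FriendIn w V i l → l = j

/-- `v` is a leaf (degree-one vertex) of the subgraph induced by `V`. -/
def LeafIn (w : α → α → ℤ) (V : Set α) (v : α) : Prop :=
  v ∈ V ∧ ∃! u : α, FriendIn w V v u

/-- `j` is a pseudo-center of the subgraph induced by `V`:
at most one neighbor of `j` is a non-leaf. -/
def PseudoCenterIn (w : α → α → ℤ) (V : Set α) (j : α) : Prop :=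
  ∀ u u' : α, FriendIn w V j u → ¬ LeafIn w V u →
    FriendIn w V j u' → ¬ LeafIn w V u' → u = u'

/-- Players removed by a list of pairs. -/
def removed (L : List (α × α)) : Set α := {v | ∃ p ∈ L, v = p.1 ∨ v = p.2}

/-- `L` is an outer elimination sequence: at each step `t`, in the graph `G_t` obtained
by deleting all earlier pairs, `j_t` is the unique friend of `i_t` and, moreover,
(E1) `j_t` is a pseudo-center of `G_t`, or (E2) `i_t` is a friend of an earlier-removed player. -/
def IsElimSeq (w : α → α → ℤ) (L : List (α × α)) : Prop :=
  ∀ (t : ℕ) (h : t < L.length),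
    UniqueFriendIn w {v | v ∉ removed (L.take t)} (L.get ⟨t, h⟩).1 (L.get ⟨t, h⟩).2 ∧
      (PseudoCenterIn w {v | v ∉ removed (L.take t)} (L.get ⟨t, h⟩).2 ∨
        ∃ q ∈ removed (L.take t), Friend w (L.get ⟨t, h⟩).1 q)

/-- `{i, j}` is an elimination pair: it appears in some outer elimination sequence. -/
def ElimPair (w : α → α → ℤ) (i j : α) : Prop :=
  ∃ L : List (α × α), IsElimSeq w L ∧ (i, j) ∈ L

/-- `P_w`: the players belonging to some elimination pair. -/
def Pset (w : α → α → ℤ) : Set α :=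
  {v | ∃ i j : α, ElimPair w i j ∧ (v = i ∨ v = j)}

/-- `S_w`: players outside `P_w` with exactly one friend outside `P_w`. -/
def Sset (w : α → α → ℤ) : Set α :=
  {v | v ∉ Pset w ∧ ∃! u : α, u ∉ Pset w ∧ Friend w v u}

/-- `B_w`: players with at least two friends outside `P_w ∪ S_w`. -/
def Bset (w : α → α → ℤ) : Set α :=
  {v | ∃ u u' : α, u ≠ u' ∧ u ∉ Pset w ∪ Sset w ∧ u' ∉ Pset w ∪ Sset w ∧
    Friend w v u ∧ Friend w v u'}

/-- `R_w`: the remaining players. -/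
def Rset (w : α → α → ℤ) : Set α := {v | v ∉ Pset w ∪ Sset w ∪ Bset w}

end ElimDefs

set_option linter.unusedSectionVars false
set_option maxHeartbeats 1000000

section Basics
variable {α : Type*} [DecidableEq α] [Fintype α] {w : α → α → ℤ}

lemma friend_symm (hw : FriendOriented w) {i j : α} (h : Friend w i j) : Friend w j i :=
  ⟨h.1.symm, by rw [← hw.1 i j]; exact h.2⟩

lemma friend_irrefl {i : α} : ¬ Friend w i i := fun h => h.1 rfl

lemma friend_ne {i j : α} (h : Friend w i j) : i ≠ j := h.1

lemma enemy_val (hw : FriendOriented w) {i j : α} (hne : i ≠ j) (hnf : ¬ Friend w i j) :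
    w i j = -1 := by
  rcases hw.2.2 i j hne with h | h
  · exfalso; apply hnf
    refine ⟨hne, h ▸ ?_⟩
    have : 0 < Fintype.card α := Fintype.card_pos_iff.mpr ⟨i⟩
    exact_mod_cast this
  · exact h

lemma util_insert_of_not_mem {S : Finset α} {i m : α} (h : i ∉ S) :
    util w (insert i S) m = w m i + util w S m := by
  simp [util, Finset.sum_insert h]

lemma util_self_singleton (hw : FriendOriented w) (i : α) : util w {i} i = 0 := by
  simp [util, hw.2.1]

lemma util_insert_self {S : Finset α} {i : α} (hw : FriendOriented w) (h : i ∉ S) :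
    util w (insert i S) i = util w S i := by
  rw [util_insert_of_not_mem h, hw.2.1, zero_add]

lemma util_erase {S : Finset α} {i m : α} (h : i ∈ S) :
    util w S m = util w (S.erase i) m + w m i := by
  rw [util]; rw [← Finset.sum_erase_add S _ h]; rfl

/-- If every member of a nonempty `D` is a friend of `i`, then `util w D i > 0`. -/
lemma util_pos_of_all_friends {D : Finset α} {i : α} (hne : D.Nonempty)
    (h : ∀ e ∈ D, Friend w i e) : 0 < util w D i := by
  apply Finset.sum_pos (fun e he => (h e he).2) hne

/-- Singleton deviation lemma: a singleton player with a friend in an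
all-friendly coalition has a CIS deviation.  Here this is used contrapositively. -/
lemma exists_enemy_of_CIStable (hw : FriendOriented w) {V : Finset α} {π : α → Finset α}
    (hCIS : CIStable w V π) {i m f : α} (hi : i ∈ V) (hsing : π i = {i}) (hm : m ∈ V)
    (hiD : i ∉ π m) (hf : f ∈ π m) (hfr : Friend w i f) :
    ∃ e ∈ π m, ¬ Friend w i e := by
  by_contra hno
  push_neg at hno
  apply hCIS i hi (π m)
  have hne : π m ≠ π i := by
    intro h; rw [h, hsing] at hf
    exact friend_irrefl (by simpa using (Finset.mem_singleton.mp hf ▸ hfr))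
  refine ⟨⟨⟨Or.inr ⟨m, hm, rfl⟩, hne, hiD, ?_⟩, ?_⟩, ?_⟩
  · rw [hsing, util_self_singleton hw, util_insert_self hw hiD]
    exact util_pos_of_all_friends ⟨f, hf⟩ hno
  · intro j hj
    rw [util_insert_of_not_mem hiD]
    have : 0 < w j i := (friend_symm hw (hno j hj)).2
    linarith
  · intro j hj
    rw [hsing] at hj; simp at hj
end Basics

section FRsec
variable {α : Type*} [DecidableEq α] [Fintype α] {w : α → α → ℤ}

/-- A player in a coalition of size ≥ 2 without internal friends yields a CIS
deviation to the empty coalition. -/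
lemma has_internal_friend (hw : FriendOriented w) {V : Finset α} {π : α → Finset α}
    (hCIS : CIStable w V π) {i : α} (hi : i ∈ V) (hself : i ∈ π i)
    {o : α} (ho : o ∈ π i) (hoi : o ≠ i) (hno : ∀ f ∈ π i, ¬ Friend w i f) : False := by
  apply hCIS i hi ∅
  have hneg : util w (π i) i < 0 := by
    have h1 : util w (π i) i = ∑ j ∈ (π i).erase i, w i j := by
      rw [util, ← Finset.sum_erase_add _ _ hself, hw.2.1, add_zero]
    have h2 : ∀ j ∈ (π i).erase i, w i j ≤ -1 := by
      intro j hj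
      have hji := Finset.mem_of_mem_erase hj
      have hne : i ≠ j := fun h => (Finset.ne_of_mem_erase hj) h.symm
      rw [enemy_val hw hne (hno j hji)]
    have h3 : ∑ j ∈ (π i).erase i, w i j ≤ ∑ _j ∈ (π i).erase i, (-1 : ℤ) :=
      Finset.sum_le_sum h2
    have h4 : o ∈ (π i).erase i := Finset.mem_erase.mpr ⟨hoi, ho⟩
    have h5 : (0:ℤ) < ((π i).erase i).card := by
      exact_mod_cast Finset.card_pos.mpr ⟨o, h4⟩
    rw [h1]
    calc ∑ j ∈ (π i).erase i, w i j ≤ ∑ _j ∈ (π i).erase i, (-1 : ℤ) := h3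
    _ = -(((π i).erase i).card : ℤ) := by simp
    _ < 0 := by linarith
  refine ⟨⟨⟨Or.inl rfl, ?_, ?_, ?_⟩, ?_⟩, ?_⟩
  · intro h; rw [← h] at hself; simp at hself
  · simp
  · rw [insert_empty_eq]
    calc util w (π i) i < 0 := hneg
    _ = util w {i} i := (util_self_singleton hw i).symm
  · intro j hj; simp at hj
  · intro j hj
    have hji := Finset.mem_of_mem_erase hj
    have hjni : j ≠ i := Finset.ne_of_mem_erase hj
    rw [util_erase hself (m := j)]
    have : w j i = -1 := by
      rw [hw.1]
      exact enemy_val hw (fun h => hjni h.symm) (hno j hji)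
    linarith

end FRsec

section RobustLemmas
variable {α : Type*} [DecidableEq α] [Fintype α] {w : α → α → ℤ} {π : α → Finset α}
lemma mem_own (hP : IsPartition (univ : Finset α) π) (i : α) : i ∈ π i := (hP.1 i (mem_univ i)).1

lemma coal_eq (hP : IsPartition (univ : Finset α) π) {i j : α} (h : j ∈ π i) : π j = π i := hP.2 i (mem_univ i) j h

/-- R1: coalitions with ≥ 2 members contain a friend. -/
lemma R1 (hw : FriendOriented w) (hP : IsPartition (univ : Finset α) π)
    (hR : Robust (CIStable w) univ π 1) {i o : α} (ho : o ∈ π i) (hoi : o ≠ i) : ∃ f ∈ π i, Friend w i f := by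
  by_contra hno
  push_neg at hno
  exact has_internal_friend hw hR.1 (mem_univ i) (mem_own hP i) ho hoi
    (fun f hf hfr => hno f hf hfr)

/-- R2: in a coalition with ≥ 3 members every member has ≥ 2 internal friends. -/
lemma R2 (hw : FriendOriented w) (hP : IsPartition (univ : Finset α) π)
    (hR : Robust (CIStable w) univ π 1) {i o o' : α} (ho : o ∈ π i) (ho' : o' ∈ π i) (hoo' : o ≠ o')
    (hoi : o ≠ i) (hoi' : o' ≠ i) :
    ∃ f ∈ π i, ∃ g ∈ π i, f ≠ g ∧ Friend w i f ∧ Friend w i g := by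
  obtain ⟨f, hf, hfr⟩ := R1 hw hP hR ho hoi
  by_contra hno
  push_neg at hno
  -- all internal friends equal f
  have huniq : ∀ g ∈ π i, Friend w i g → g = f := by
    intro g hg hgr
    by_contra hgf
    exact hgf (by simpa using hno f hf g hg (fun h => hgf h.symm) hfr hgr)
  -- delete f
  have hif : i ≠ f := friend_ne hfr
  have hCIS' : CIStable w (univ \ {f}) (fun v => π v \ {f}) :=
    hR.2 {f} (by simp) (by simp)
  -- i's truncated coalition has ≥ 2 members and no internal friend
  have hiV : i ∈ univ \ {f} := by simp [hif]
  have hself : i ∈ π i \ {f} := by simp [mem_own hP i, hif]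
  -- find a member of π i \ {f} other than i
  obtain ⟨o2, ho2, ho2i⟩ : ∃ o2 ∈ π i \ {f}, o2 ≠ i := by
    by_cases h1 : o = f
    · by_cases h2 : o' = f
      · exact absurd (h1.trans h2.symm) hoo'
      · exact ⟨o', by simp [ho', h2], hoi'⟩
    · exact ⟨o, by simp [ho, h1], hoi⟩
  exact has_internal_friend hw hCIS' hiV hself ho2 ho2i
    (fun g hg hgr => by
      have hgf : g = f := huniq g (Finset.mem_sdiff.mp hg).1 hgr
      exact absurd hgf (by simpa using (Finset.mem_sdiff.mp hg).2))

/-- R3': a singleton player's friend-containing coalitions contain two enemies. -/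
lemma R3 (hw : FriendOriented w) (hP : IsPartition (univ : Finset α) π)
    (hR : Robust (CIStable w) univ π 1) {i m c : α} (hsing : π i = {i}) (hiD : i ∉ π m) (hc : c ∈ π m)
    (hfr : Friend w i c) :
    ∃ e1 ∈ π m, ∃ e2 ∈ π m, e1 ≠ e2 ∧ ¬ Friend w i e1 ∧ ¬ Friend w i e2 := by
  obtain ⟨e1, he1, he1n⟩ :=
    exists_enemy_of_CIStable hw hR.1 (mem_univ i) hsing (mem_univ m) hiD hc hfr
  have he1i : e1 ≠ i := fun h => hiD (h ▸ he1)
  have hCIS' : CIStable w (univ \ {e1}) (fun v => π v \ {e1}) :=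
    hR.2 {e1} (by simp) (by simp)
  have hce1 : c ≠ e1 := fun h => he1n (h ▸ hfr)
  have hie1 : i ∈ univ \ {e1} := by simp; exact fun h => he1i h.symm
  have hsing' : π i \ {e1} = {i} := by
    rw [hsing]
    ext v; simp only [Finset.mem_sdiff, Finset.mem_singleton]
    constructor
    · rintro ⟨h, _⟩; exact h
    · rintro rfl; exact ⟨rfl, fun h => he1i h.symm⟩
  have hcm : π c = π m := coal_eq hP hc
  obtain ⟨e2, he2, he2n⟩ :=
    exists_enemy_of_CIStable hw hCIS' (i := i) (m := c) (f := c) hie1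
      (by simpa using hsing') (by simp [hce1])
      (by rw [hcm]; simp [hiD])
      (by rw [hcm]; simp [hc, hce1]) hfr
  rw [hcm] at he2
  have he2m := (Finset.mem_sdiff.mp he2).1
  have he2e1 : e2 ≠ e1 := by simpa using (Finset.mem_sdiff.mp he2).2
  exact ⟨e1, he1, e2, he2m, fun h => he2e1 h.symm, he1n, he2n⟩

end RobustLemmas

section ElimInfra
variable {α : Type*} [DecidableEq α] [Fintype α] {w : α → α → ℤ}

lemma mem_removed {L : List (α × α)} {v : α} :
    v ∈ removed L ↔ ∃ p ∈ L, v = p.1 ∨ v = p.2 := Iff.rfl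

lemma removed_nil : removed ([] : List (α × α)) = ∅ := by
  ext v; simp [removed]

lemma removed_mono {L₁ L₂ : List (α × α)} (h : L₁ ⊆ L₂) : removed L₁ ⊆ removed L₂ :=
  fun _v ⟨p, hp, h2⟩ => ⟨p, h hp, h2⟩

lemma removed_append {L₁ L₂ : List (α × α)} :
    removed (L₁ ++ L₂) = removed L₁ ∪ removed L₂ := by
  ext v
  simp only [removed, Set.mem_setOf_eq, List.mem_append, Set.mem_union]
  constructor
  · rintro ⟨p, hp | hp, h2⟩
    · exact Or.inl ⟨p, hp, h2⟩
    · exact Or.inr ⟨p, hp, h2⟩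
  · rintro (⟨p, hp, h2⟩ | ⟨p, hp, h2⟩)
    · exact ⟨p, Or.inl hp, h2⟩
    · exact ⟨p, Or.inr hp, h2⟩

lemma removed_take_subset {L : List (α × α)} (t : ℕ) :
    removed (L.take t) ⊆ removed L := removed_mono (List.take_subset _ _)

lemma removed_take_mono {L : List (α × α)} {t t' : ℕ} (h : t ≤ t') :
    removed (L.take t) ⊆ removed (L.take t') := by
  have : L.take t = (L.take t').take t := by
    rw [List.take_take, min_eq_left h]
  rw [this]
  exact removed_mono (List.take_subset _ _)

lemma removed_take_succ {L : List (α × α)} {t : ℕ} (h : t < L.length) :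
    removed (L.take (t + 1)) =
      removed (L.take t) ∪ {v | v = (L.get ⟨t, h⟩).1 ∨ v = (L.get ⟨t, h⟩).2} := by
  have h1 : L.take (t+1) = L.take t ++ [L.get ⟨t, h⟩] := by
    rw [List.take_succ]
    congr 1
    rw [List.getElem?_eq_getElem h]
    simp [List.get_eq_getElem]
  rw [h1, removed_append]
  congr 1
  ext v; simp [removed]

/-- An appendable pair. -/
def ValidFrom (w : α → α → ℤ) (L : List (α × α)) (i j : α) : Prop :=
  UniqueFriendIn w {v | v ∉ removed L} i j ∧
    (PseudoCenterIn w {v | v ∉ removed L} j ∨ ∃ q ∈ removed L, Friend w i q)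

lemma isElimSeq_append {L : List (α × α)} {i j : α} (hL : IsElimSeq w L)
    (hv : ValidFrom w L i j) : IsElimSeq w (L ++ [(i, j)]) := by
  intro t h
  have hlen : (L ++ [(i, j)]).length = L.length + 1 := by simp
  by_cases ht : t < L.length
  · have htake : (L ++ [(i, j)]).take t = L.take t :=
      List.take_append_of_le_length (le_of_lt ht)
    have hget : (L ++ [(i, j)]).get ⟨t, h⟩ = L.get ⟨t, ht⟩ := by
      simp only [List.get_eq_getElem]
      exact List.getElem_append_left ht
    rw [htake, hget]
    exact hL t ht
  · have hteq : t = L.length := by omega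
    subst hteq
    have htake : (L ++ [(i, j)]).take L.length = L := List.take_left
    have hget : (L ++ [(i, j)]).get ⟨L.length, h⟩ = (i, j) := by
      simp only [List.get_eq_getElem]
      rw [List.getElem_append_right (le_refl _)]
      simp
    rw [htake, hget]
    exact hv

/-- Members of an elimination sequence are in `Pset`. -/
lemma removed_subset_Pset {L : List (α × α)} (hL : IsElimSeq w L) {v : α}
    (hv : v ∈ removed L) : v ∈ Pset w := by
  obtain ⟨p, hp, hor⟩ := hv
  exact ⟨p.1, p.2, ⟨L, hL, by simpa using hp⟩, hor⟩

/-- The removal time of a vertex. -/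
noncomputable def tOf (L : List (α × α)) (v : α) : ℕ :=
  sInf {t | v ∈ removed (L.take (t + 1))}

lemma tOf_mem {L : List (α × α)} {v : α} (hv : v ∈ removed L) :
    v ∈ removed (L.take (tOf L v + 1)) := by
  have hmem : L.length ∈ {t | v ∈ removed (L.take (t + 1))} := by
    show v ∈ removed (L.take (L.length + 1))
    rwa [List.take_of_length_le (by omega)]
  exact Nat.sInf_mem ⟨L.length, hmem⟩

lemma tOf_le {L : List (α × α)} {v : α} {t : ℕ} (h : v ∈ removed (L.take (t + 1))) :
    tOf L v ≤ t := Nat.sInf_le h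

lemma not_removed_of_le_tOf {L : List (α × α)} {v : α} {k : ℕ} (hk : k ≤ tOf L v) :
    v ∉ removed (L.take k) := by
  intro hmem
  match k, hk with
  | 0, _ => rw [List.take_zero, removed_nil] at hmem; exact hmem
  | (k' + 1), hk =>
    have := tOf_le hmem
    omega

lemma tOf_lt_of_removed_take {L : List (α × α)} {v : α} {k : ℕ}
    (h : v ∈ removed (L.take k)) : tOf L v < k := by
  match k with
  | 0 => rw [List.take_zero, removed_nil] at h; exact absurd h (fun h => h)
  | (k' + 1) => exact Nat.lt_succ_of_le (tOf_le h)

lemma tOf_lt_length {L : List (α × α)} {v : α} (hv : v ∈ removed L) :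
    tOf L v < L.length := by
  by_contra hge
  push_neg at hge
  have : L.take (tOf L v) = L := List.take_of_length_le hge
  exact not_removed_of_le_tOf (le_refl _) (by rwa [this])

lemma tOf_spec {L : List (α × α)} {v : α} (hv : v ∈ removed L) :
    v = (L.get ⟨tOf L v, tOf_lt_length hv⟩).1 ∨
    v = (L.get ⟨tOf L v, tOf_lt_length hv⟩).2 := by
  have h1 := tOf_mem hv
  rw [removed_take_succ (tOf_lt_length hv)] at h1
  rcases h1 with h1 | h1
  · exact absurd h1 (not_removed_of_le_tOf (le_refl _))
  · exact h1

lemma tOf_eq_of_occurs {L : List (α × α)} (hL : IsElimSeq w L) {k : ℕ} (h : k < L.length)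
    {v : α} (hocc : v = (L.get ⟨k, h⟩).1 ∨ v = (L.get ⟨k, h⟩).2) : tOf L v = k := by
  have hvR : v ∈ removed (L.take (k + 1)) := by
    rw [removed_take_succ h]; exact Or.inr hocc
  have h1 : tOf L v ≤ k := tOf_le hvR
  -- alive at its own step
  have halive : v ∉ removed (L.take k) := by
    obtain ⟨⟨ha, hb, _⟩, _⟩ := (hL k h).1
    rcases hocc with rfl | rfl
    · exact ha
    · exact hb
  by_contra hne
  have hlt : tOf L v < k := lt_of_le_of_ne h1 hne
  have : v ∈ removed (L.take k) :=
    removed_take_mono (by omega) (tOf_mem (removed_take_subset _ hvR))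
  exact halive this

end ElimInfra

section LemX
variable {α : Type*} [DecidableEq α] [Fintype α] {w : α → α → ℤ}

/-- If `v`'s friend `c` is still alive right after `v`'s removal step, then `v`
was removed as the second component (the "center") of its pair. -/
lemma is_center {L : List (α × α)} (hL : IsElimSeq w L) {v c : α} (hv : v ∈ removed L)
    (hfr : Friend w v c) (hcal : c ∉ removed (L.take (tOf L v + 1))) :
    v = (L.get ⟨tOf L v, tOf_lt_length hv⟩).2 := by
  rcases tOf_spec hv with hfst | hsnd
  · exfalso
    obtain ⟨⟨hxal, hbal, hfrp⟩, huq⟩ := (hL (tOf L v) (tOf_lt_length hv)).1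
    have hcalive : c ∉ removed (L.take (tOf L v)) :=
      fun h => hcal (removed_take_mono (Nat.le_succ _) h)
    have : c = (L.get ⟨tOf L v, tOf_lt_length hv⟩).2 := by
      apply huq
      exact ⟨hxal, hcalive, hfst ▸ hfr⟩
    apply hcal
    rw [removed_take_succ (tOf_lt_length hv)]
    exact Or.inr (Or.inr this)
  · exact hsnd

/-- Still-alive-at `t+1` from "not removed at all, or removed later". -/
lemma alive_of_later {L : List (α × α)} {v c : α}
    (h : c ∉ removed L ∨ tOf L v < tOf L c) : c ∉ removed (L.take (tOf L v + 1)) := by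
  intro hc
  rcases h with h | h
  · exact h (removed_take_subset _ hc)
  · have := tOf_le hc
    omega

/-- The descent invariant: `x` is removed in both sequences, forms the first
component of its `LT`-pair `(x, c)`, and `c` outlives `x` in `L0`. -/
def INVp (LT L0 : List (α × α)) (x c : α) : Prop :=
  x ∈ removed L0 ∧
    (∃ h : tOf LT x < LT.length, LT.get ⟨tOf LT x, h⟩ = (x, c)) ∧
    (c ∉ removed L0 ∨ tOf L0 x < tOf L0 c)

lemma descent (hw : FriendOriented w) {LT L0 : List (α × α)}
    (hLT : IsElimSeq w LT) (hL0 : IsElimSeq w L0) :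
    ∀ N : ℕ, ∀ x c : α, INVp LT L0 x c → tOf L0 x < N → False := by
  intro N
  induction N with
  | zero => intro x c _ h; omega
  | succ N ih =>
    intro x c hinv hxN
    obtain ⟨hx0, ⟨hT, hpair⟩, hcR⟩ := hinv
    -- x occurs in LT at its own recorded time
    have hxT : x ∈ removed LT := by
      refine ⟨LT.get ⟨tOf LT x, hT⟩, List.get_mem _ _, ?_⟩
      rw [hpair]; exact Or.inl rfl
    set t0 := tOf LT x with ht0
    set m := tOf L0 x with hm
    -- LT-step data for (x, c)
    obtain ⟨⟨hxalT, hcalT, hfrxc'⟩, huqT⟩ := (hLT t0 hT).1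
    rw [hpair] at hfrxc' huqT hcalT hxalT
    have hfrxc : Friend w x c := hfrxc'
    -- Step 1: x is a center in L0
    have hm_lt := tOf_lt_length hx0
    have hxc2 : x = (L0.get ⟨m, hm_lt⟩).2 :=
      is_center hL0 hx0 hfrxc (alive_of_later hcR)
    set u := (L0.get ⟨m, hm_lt⟩).1 with hu
    have hpair0 : L0.get ⟨m, hm_lt⟩ = (u, x) := Prod.ext rfl hxc2.symm
    have hu0 : u ∈ removed L0 := by
      refine ⟨L0.get ⟨m, hm_lt⟩, List.get_mem _ _, ?_⟩
      rw [hpair0]; exact Or.inl rfl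
    have htu0 : tOf L0 u = m := tOf_eq_of_occurs hL0 hm_lt (by rw [hpair0]; exact Or.inl rfl)
    obtain ⟨⟨hual0, hxal0, hfrux'⟩, huq0⟩ := (hL0 m hm_lt).1
    rw [hpair0] at hfrux' huq0 hual0 hxal0
    have hfrux : Friend w u x := hfrux'
    -- Step 2: u is removed in LT before t0
    have huTtake : u ∈ removed (LT.take t0) := by
      by_contra hal
      have : u = c := huqT u ⟨hxalT, hal, friend_symm hw hfrux⟩
      subst this
      rcases hcR with h | h
      · exact h hu0
      · rw [htu0] at h; omega
    have huT : u ∈ removed LT := removed_take_subset _ huTtake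
    have hku_lt : tOf LT u < t0 := tOf_lt_of_removed_take huTtake
    -- Step 3: u is a center in LT
    have hkT := tOf_lt_length huT
    have hu2 : u = (LT.get ⟨tOf LT u, hkT⟩).2 :=
      is_center hLT huT hfrux (alive_of_later (Or.inr (by omega)))
    set ku := tOf LT u with hku
    set x' := (LT.get ⟨ku, hkT⟩).1 with hx'
    have hpairT' : LT.get ⟨ku, hkT⟩ = (x', u) := Prod.ext rfl hu2.symm
    have htx' : tOf LT x' = ku :=
      tOf_eq_of_occurs hLT hkT (by rw [hpairT']; exact Or.inl rfl)
    obtain ⟨⟨hx'al, hual', hfrx'u'⟩, huqT'⟩ := (hLT ku hkT).1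
    rw [hpairT'] at hfrx'u' huqT' hx'al hual'
    have hfrx'u : Friend w x' u := hfrx'u'
    -- Step 4: x' is removed in L0 strictly before m
    have hx'0take : x' ∈ removed (L0.take m) := by
      by_contra hal
      have hxx : x' = x := huq0 x' ⟨hual0, hal, friend_symm hw hfrx'u⟩
      rw [hxx] at htx'
      omega
    have hx'0 : x' ∈ removed L0 := removed_take_subset _ hx'0take
    have hmx' : tOf L0 x' < m := tOf_lt_of_removed_take hx'0take
    -- Step 5: recurse
    refine ih x' u ⟨hx'0, ⟨?_, ?_⟩, Or.inr (by omega)⟩ (by omega)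
    · omega
    · have hfin : (⟨tOf LT x', by omega⟩ : Fin LT.length) = ⟨ku, hkT⟩ := by
        apply Fin.ext; exact htx'
      rw [hfin]
      exact hpairT'

/-- LEMMA X: if `(a,b)` is a valid elimination pair relative to the state of `L0`
and `a` is removed by `LT`, then so is `b`. -/
lemma lemX (hw : FriendOriented w) {LT L0 : List (α × α)}
    (hLT : IsElimSeq w LT) (hL0 : IsElimSeq w L0) {a b : α}
    (hu : UniqueFriendIn w {v | v ∉ removed L0} a b)
    (haT : a ∈ removed LT) (hbT : b ∉ removed LT) : False := by
  obtain ⟨⟨ha0, hb0, hfr⟩, huq⟩ := hu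
  have hkaT := tOf_lt_length haT
  have ha2 : a = (LT.get ⟨tOf LT a, hkaT⟩).2 :=
    is_center hLT haT hfr (alive_of_later (Or.inl hbT))
  set x := (LT.get ⟨tOf LT a, hkaT⟩).1 with hx
  have hpairT : LT.get ⟨tOf LT a, hkaT⟩ = (x, a) := Prod.ext rfl ha2.symm
  have hxT : x ∈ removed LT := by
    refine ⟨LT.get ⟨tOf LT a, hkaT⟩, List.get_mem _ _, ?_⟩
    rw [hpairT]; exact Or.inl rfl
  have htx : tOf LT x = tOf LT a :=
    tOf_eq_of_occurs hLT hkaT (by rw [hpairT]; exact Or.inl rfl)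
  obtain ⟨⟨hxalT, haalT, hfrxa'⟩, _⟩ := (hLT (tOf LT a) hkaT).1
  rw [hpairT] at hfrxa'
  have hfrxa : Friend w x a := hfrxa'
  have hx0 : x ∈ removed L0 := by
    by_contra hxn0
    have : x = b := huq x ⟨ha0, hxn0, friend_symm hw hfrxa⟩
    rw [this] at hxT
    exact hbT hxT
  refine descent hw hLT hL0 (tOf L0 x + 1) x a ⟨hx0, ⟨?_, ?_⟩, Or.inl ha0⟩ (by omega)
  · omega
  · have hfin : (⟨tOf LT x, by omega⟩ : Fin LT.length) = ⟨tOf LT a, hkaT⟩ := by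
      apply Fin.ext; exact htx
    rw [hfin]
    exact hpairT
end LemX

section Stuck
variable {α : Type*} [DecidableEq α] [Fintype α] {w : α → α → ℤ}

lemma isElimSeq_nil : IsElimSeq w ([] : List (α × α)) := by
  intro t h; simp at h

lemma isElimSeq_prefix {L1 L2 : List (α × α)} (h : IsElimSeq w (L1 ++ L2)) :
    IsElimSeq w L1 := by
  intro t ht
  have ht' : t < (L1 ++ L2).length := by simp; omega
  have hs := h t ht'
  have htake : (L1 ++ L2).take t = L1.take t :=
    List.take_append_of_le_length (le_of_lt ht)
  have hget : (L1 ++ L2).get ⟨t, ht'⟩ = L1.get ⟨t, ht⟩ := by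
    simp only [List.get_eq_getElem]
    exact List.getElem_append_left ht
  rwa [htake, hget] at hs

noncomputable def removedF (L : List (α × α)) : Finset α :=
  @Finset.filter _ (· ∈ removed L) (Classical.decPred _) Finset.univ

lemma exists_stuck (w : α → α → ℤ) :
    ∃ L : List (α × α), IsElimSeq w L ∧ ∀ i j : α, ¬ ValidFrom w L i j := by
  suffices haux : ∀ (g : ℕ) (L : List (α × α)), IsElimSeq w L →
      Fintype.card α - (removedF L).card ≤ g →
      ∃ L', IsElimSeq w L' ∧ ∀ i j : α, ¬ ValidFrom w L' i j by
    exact haux (Fintype.card α) [] isElimSeq_nil (by omega)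
  intro g
  induction g with
  | zero =>
    intro L hL hcard
    by_cases hstuck : ∀ i j : α, ¬ ValidFrom w L i j
    · exact ⟨L, hL, hstuck⟩
    · exfalso
      push_neg at hstuck
      obtain ⟨i, j, hv⟩ := hstuck
      have hiL : i ∉ removed L := hv.1.1.1
      have hle : (removedF L).card < Fintype.card α := by
        have : removedF L ⊂ Finset.univ := by
          rw [Finset.ssubset_iff_of_subset (Finset.subset_univ _)]
          exact ⟨i, Finset.mem_univ i, by simp [removedF, hiL]⟩
        simpa [Finset.card_univ] using Finset.card_lt_card this
      omega
  | succ g ihg =>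
    intro L hL hcard
    by_cases hstuck : ∀ i j : α, ¬ ValidFrom w L i j
    · exact ⟨L, hL, hstuck⟩
    · push_neg at hstuck
      obtain ⟨i, j, hv⟩ := hstuck
      have hiL : i ∉ removed L := hv.1.1.1
      apply ihg (L ++ [(i, j)]) (isElimSeq_append hL hv)
      have hsub : removedF L ⊂ removedF (L ++ [(i, j)]) := by
        constructor
        · intro v hvv
          simp only [removedF, Finset.mem_filter] at hvv ⊢
          exact ⟨hvv.1, by rw [removed_append]; exact Or.inl hvv.2⟩
        · intro hcon
          have : i ∈ removedF (L ++ [(i, j)]) := by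
            simp only [removedF, Finset.mem_filter]
            exact ⟨Finset.mem_univ i, by rw [removed_append]; exact Or.inr ⟨(i,j), by simp⟩⟩
          exact hiL (by simpa [removedF] using hcon this)
      have h1 := Finset.card_lt_card hsub
      have h2 : (removedF (L ++ [(i,j)])).card ≤ Fintype.card α := by
        simpa [Finset.card_univ] using Finset.card_le_card (Finset.subset_univ (removedF (L ++ [(i,j)])))
      omega

/-- The core covering lemma: relative to a stuck sequence `LT`, every vertex
removed by any other elimination sequence is either removed by `LT` or isolated
in the remaining graph. -/
lemma stuckCover (hw : FriendOriented w) {LT : List (α × α)} (hstuck : IsElimSeq w LT)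
    (hnv : ∀ i j : α, ¬ ValidFrom w LT i j) :
    ∀ (M L0 : List (α × α)), IsElimSeq w (L0 ++ M) →
      (∀ v ∈ removed L0, v ∉ removed LT → ∀ u, Friend w v u → u ∈ removed LT) →
      (∀ v ∈ removed (L0 ++ M), v ∉ removed LT → ∀ u, Friend w v u → u ∈ removed LT) := by
  intro M
  induction M with
  | nil =>
    intro L0 _hseq hinv v hv
    rw [List.append_nil] at hv
    exact hinv v hv
  | cons p M' ih =>
    intro L0 hseq hinv
    obtain ⟨a, b⟩ := p
    have hL0 : IsElimSeq w L0 := isElimSeq_prefix (L1 := L0) (L2 := (a,b) :: M') hseq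
    have hlen : L0.length < (L0 ++ (a, b) :: M').length := by simp
    have htake : (L0 ++ (a, b) :: M').take L0.length = L0 := List.take_left
    have hget : (L0 ++ (a, b) :: M').get ⟨L0.length, hlen⟩ = (a, b) := by
      simp only [List.get_eq_getElem]
      rw [List.getElem_append_right (le_refl _)]
      simp
    have hvalid := hseq L0.length hlen
    rw [htake, hget] at hvalid
    obtain ⟨⟨⟨haal, hbal, hfr⟩, huq⟩, hE⟩ := hvalid
    have hseq' : IsElimSeq w ((L0 ++ [(a, b)]) ++ M') := by
      rw [List.append_assoc, List.singleton_append]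
      exact hseq
    have hinv' : ∀ v ∈ removed (L0 ++ [(a, b)]), v ∉ removed LT →
        ∀ u, Friend w v u → u ∈ removed LT := by
      intro v hv hvT u hfru
      rw [removed_append] at hv
      rcases hv with hv | hv
      · exact hinv v hv hvT u hfru
      · have hv' : v = a ∨ v = b := by
          simpa [removed] using hv
        by_cases haT : a ∈ removed LT
        · -- by Lemma X, b is removed too, so both are: contradiction with hvT
          have hbT : b ∈ removed LT := by
            by_contra hbT
            exact lemX hw hstuck hL0 ⟨⟨haal, hbal, hfr⟩, huq⟩ haT hbT
          rcases hv' with rfl | rfl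
          · exact absurd haT hvT
          · exact absurd hbT hvT
        · by_cases hbT : b ∈ removed LT
          · rcases hv' with rfl | rfl
            · -- v = a : a is isolated in the LT-world
              by_cases hu0 : u ∈ removed L0
              · by_cases huT : u ∈ removed LT
                · exact huT
                · exact absurd (hinv u hu0 huT v (friend_symm hw hfru)) haT
              · have : u = b := huq u ⟨haal, hu0, hfru⟩
                rw [this]; exact hbT
            · exact absurd hbT hvT
          · -- both alive in the LT-world: (a,b) would be a valid pair for LT
            exfalso
            apply hnv a b
            have hauniq : ∀ l : α, FriendIn w {v | v ∉ removed LT} a l → l = b := by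
              rintro l ⟨_, hlT, hfrl⟩
              by_cases hl0 : l ∈ removed L0
              · exact absurd (hinv l hl0 hlT a (friend_symm hw hfrl)) haT
              · exact huq l ⟨haal, hl0, hfrl⟩
            refine ⟨⟨⟨haT, hbT, hfr⟩, hauniq⟩, ?_⟩
            have hleaf : ∀ u', u' ∉ removed LT → u' ∉ removed L0 → Friend w b u' →
                LeafIn w {v | v ∉ removed L0} u' → LeafIn w {v | v ∉ removed LT} u' := by
              rintro u' hu'T hu'0 hfrbu ⟨_, f0, hf0, huniq0⟩
              have hf0b : b = f0 := huniq0 b ⟨hu'0, hbal, friend_symm hw hfrbu⟩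
              refine ⟨hu'T, b, ⟨hu'T, hbT, friend_symm hw hfrbu⟩, ?_⟩
              rintro l ⟨_, hlT, hfrl⟩
              have hl0 : l ∉ removed L0 := by
                intro hl0
                exact hu'T (hinv l hl0 hlT u' (friend_symm hw hfrl))
              rw [← hf0b] at huniq0
              exact huniq0 l ⟨hu'0, hl0, hfrl⟩
            rcases hE with hPC | ⟨q, hq, hfrq⟩
            · left
              rintro u1 u2 ⟨_, hu1T, hfr1⟩ hnl1 ⟨_, hu2T, hfr2⟩ hnl2
              have hu1_0 : u1 ∉ removed L0 := by
                intro h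
                exact hbT (hinv u1 h hu1T b (friend_symm hw hfr1))
              have hu2_0 : u2 ∉ removed L0 := by
                intro h
                exact hbT (hinv u2 h hu2T b (friend_symm hw hfr2))
              exact hPC u1 u2 ⟨hbal, hu1_0, hfr1⟩
                (fun hl => hnl1 (hleaf u1 hu1T hu1_0 hfr1 hl))
                ⟨hbal, hu2_0, hfr2⟩
                (fun hl => hnl2 (hleaf u2 hu2T hu2_0 hfr2 hl))
            · right
              refine ⟨q, ?_, hfrq⟩
              by_cases hqT : q ∈ removed LT
              · exact hqT
              · exact absurd (hinv q hq hqT a (friend_symm hw hfrq)) haT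
    intro v hv hvT u hfru
    apply ih (L0 ++ [(a, b)]) hseq' hinv' v ?_ hvT u hfru
    rw [List.append_assoc, List.singleton_append]
    exact hv

/-- P is covered by any stuck sequence, up to isolated-in-the-end vertices. -/
lemma P_covered (hw : FriendOriented w) {LT : List (α × α)} (hstuck : IsElimSeq w LT)
    (hnv : ∀ i j : α, ¬ ValidFrom w LT i j) :
    ∀ v ∈ Pset w, v ∉ removed LT → ∀ u, Friend w v u → u ∈ removed LT := by
  rintro v ⟨i, j, ⟨L, hL, hmem⟩, hor⟩ hvT u hfru
  have hv : v ∈ removed L := ⟨(i, j), hmem, by simpa using hor⟩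
  exact stuckCover hw hstuck hnv L [] (by simpa using hL)
    (by intro x hx; rw [removed_nil] at hx; exact absurd hx (Set.notMem_empty x))
    v (by simpa using hv) hvT u hfru

end Stuck

section PPair
variable {α : Type*} [DecidableEq α] [Fintype α] {w : α → α → ℤ} {π : α → Finset α}

/-- PPAIR: in a robust partition, the coalition of the first member of any
elimination step is exactly the eliminated pair. -/
lemma claimPP (hw : FriendOriented w) (hP : IsPartition (univ : Finset α) π)
    (hR : Robust (CIStable w) univ π 1) {L : List (α × α)} (hL : IsElimSeq w L) :
    ∀ t (h : t < L.length),
      π (L.get ⟨t, h⟩).1 = {(L.get ⟨t, h⟩).1, (L.get ⟨t, h⟩).2} := by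
  intro t
  induction t using Nat.strong_induction_on with
  | _ t ih =>
    intro h
    obtain ⟨⟨⟨haal, hcal, hfrac⟩, huq⟩, hE⟩ := hL t h
    set a := (L.get ⟨t, h⟩).1 with ha
    set c := (L.get ⟨t, h⟩).2 with hc
    have hac : a ≠ c := friend_ne hfrac
    -- coalitions of already-removed vertices are earlier pairs
    have hdead : ∀ f ∈ removed (L.take t), ∃ p1 p2 : α, π f = {p1, p2} ∧
        p1 ∈ removed (L.take t) ∧ p2 ∈ removed (L.take t) ∧ (f = p1 ∨ f = p2) := by
      rintro f ⟨p, hp, hor⟩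
      obtain ⟨k, hk, hpk⟩ := List.mem_iff_getElem.mp hp
      have hklen : k < L.length := by
        have : (L.take t).length = min t L.length := List.length_take
        omega
      have hkt : k < t := by
        have : (L.take t).length = min t L.length := List.length_take
        omega
      have hgetk : L.get ⟨k, hklen⟩ = p := by
        rw [List.get_eq_getElem, ← List.getElem_take (xs := L) (j := t) (h := hk)]
        exact hpk
      have hIH := ih k hkt hklen
      rw [hgetk] at hIH
      refine ⟨p.1, p.2, ?_, ⟨p, hp, Or.inl rfl⟩, ⟨p, hp, Or.inr rfl⟩, hor⟩
      rcases hor with rfl | rfl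
      · exact hIH
      · have hmem : p.2 ∈ π p.1 := by
          rw [hIH]; exact Finset.mem_insert.mpr (Or.inr (Finset.mem_singleton_self _))
        rw [coal_eq hP hmem, hIH]
    -- a is alive: not a member of any earlier pair
    have hdead_not_a : ∀ f ∈ removed (L.take t), a ∉ π f := by
      intro f hfd hmem
      obtain ⟨p1, p2, hpf, hp1, hp2, _⟩ := hdead f hfd
      have hain : a ∈ ({p1, p2} : Finset α) := by
        rw [← hpf, ← coal_eq hP hmem]; exact mem_own hP a
      rcases Finset.mem_insert.mp hain with rfl | hain
      · exact haal hp1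
      · rw [Finset.mem_singleton.mp hain] at haal
        exact haal hp2
    by_cases hfriend : ∃ f ∈ π a, Friend w a f
    · -- internal friends of a are exactly c
      have hfc : ∀ f' ∈ π a, Friend w a f' → f' = c := by
        intro f' hf' hfr'
        by_cases hf'd : f' ∈ removed (L.take t)
        · exact absurd (by rw [coal_eq hP hf']; exact mem_own hP a)
            (hdead_not_a f' hf'd)
        · exact huq f' ⟨haal, hf'd, hfr'⟩
      obtain ⟨f, hfmem, hfr⟩ := hfriend
      have hcmem : c ∈ π a := by rw [← hfc f hfmem hfr]; exact hfmem
      apply Finset.Subset.antisymm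
      · intro m hm
        by_cases hma : m = a
        · simp [hma]
        by_cases hmc : m = c
        · simp [hmc]
        exfalso
        obtain ⟨f1, hf1, f2, hf2, hne, hfr1, hfr2⟩ :=
          R2 hw hP hR (i := a) (o := m) (o' := c) hm hcmem hmc hma (fun h => hac h.symm)
        exact hne ((hfc f1 hf1 hfr1).trans (hfc f2 hf2 hfr2).symm)
      · rw [Finset.insert_subset_iff, Finset.singleton_subset_iff]
        exact ⟨mem_own hP a, hcmem⟩
    · -- no internal friend: a is a singleton, contradiction
      push_neg at hfriend
      exfalso
      have hsing : π a = {a} := by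
        apply Finset.eq_singleton_iff_unique_mem.mpr
        refine ⟨mem_own hP a, ?_⟩
        intro m hm
        by_contra hma
        obtain ⟨f, hf, hfr⟩ := R1 hw hP hR (i := a) (o := m) hm hma
        exact hfriend f hf hfr
      by_cases hdf : ∃ f, Friend w a f ∧ f ∈ removed (L.take t)
      · -- a dead friend's pair-coalition cannot contain two enemies of a
        obtain ⟨f, hfr, hfd⟩ := hdf
        obtain ⟨p1, p2, hpf, hp1, hp2, hfor⟩ := hdead f hfd
        have hanin : a ∉ π f := hdead_not_a f hfd
        obtain ⟨e1, he1, e2, he2, hne, hen1, hen2⟩ :=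
          R3 hw hP hR hsing hanin (mem_own hP f) hfr
        rw [hpf] at he1 he2
        have hf1 : e1 ≠ f := fun hh => hen1 (hh ▸ hfr)
        have hf2 : e2 ≠ f := fun hh => hen2 (hh ▸ hfr)
        rcases hfor with rfl | rfl
        · have h1 : e1 = p2 := by
            rcases Finset.mem_insert.mp he1 with h | h
            · exact absurd h hf1
            · exact Finset.mem_singleton.mp h
          have h2 : e2 = p2 := by
            rcases Finset.mem_insert.mp he2 with h | h
            · exact absurd h hf2
            · exact Finset.mem_singleton.mp h
          exact hne (h1.trans h2.symm)
        · have h1 : e1 = p1 := by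
            rcases Finset.mem_insert.mp he1 with h | h
            · exact h
            · exact absurd (Finset.mem_singleton.mp h) hf1
          have h2 : e2 = p1 := by
            rcases Finset.mem_insert.mp he2 with h | h
            · exact h
            · exact absurd (Finset.mem_singleton.mp h) hf2
          exact hne (h1.trans h2.symm)
      · -- no dead friend: the pseudo-center condition is violated
        push_neg at hdf
        have hPC : PseudoCenterIn w {v | v ∉ removed (L.take t)} c := by
          rcases hE with hh | ⟨q, hq, hfrq⟩
          · exact hh
          · exact absurd hq (hdf q hfrq)
        have hanin : a ∉ π c := by
          intro hmem
          have hcmem : c ∈ π a := by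
            rw [coal_eq hP hmem]; exact mem_own hP c
          rw [hsing] at hcmem
          exact hac (Finset.mem_singleton.mp hcmem).symm
        obtain ⟨e1, he1, e2, he2, hne, hen1, hen2⟩ :=
          R3 hw hP hR hsing hanin (mem_own hP c) hfrac
        have halivemem : ∀ m ∈ π c, m ∉ removed (L.take t) := by
          intro m hm hmd
          obtain ⟨p1, p2, hpm, hp1, hp2, _⟩ := hdead m hmd
          have hcin : c ∈ ({p1, p2} : Finset α) := by
            rw [← hpm, coal_eq hP hm]; exact mem_own hP c
          rcases Finset.mem_insert.mp hcin with rfl | hcin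
          · exact hcal hp1
          · rw [Finset.mem_singleton.mp hcin] at hcal
            exact hcal hp2
        have hce1 : e1 ≠ c := fun hh => hen1 (hh ▸ hfrac)
        have hce2 : e2 ≠ c := fun hh => hen2 (hh ▸ hfrac)
        obtain ⟨p, hp, q, hq, hpq, hfrcp, hfrcq⟩ :=
          R2 hw hP hR (i := c) he1 he2 hne hce1 hce2
        have hnonleaf : ∀ p', p' ∈ π c → ¬ LeafIn w {v | v ∉ removed (L.take t)} p' := by
          intro p' hp' hleaf
          obtain ⟨o, o', ho, ho', Hoo, Hop, Hop'⟩ : ∃ o o', o ∈ π c ∧ o' ∈ π c ∧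
              o ≠ o' ∧ o ≠ p' ∧ o' ≠ p' := by
            by_cases h1 : p' = c
            · exact ⟨e1, e2, he1, he2, hne, fun hh => hce1 (h1 ▸ hh),
                fun hh => hce2 (h1 ▸ hh)⟩
            · by_cases h2 : p' = e1
              · exact ⟨c, e2, mem_own hP c, he2, fun hh => hce2 hh.symm,
                  fun hh => h1 hh.symm, fun hh => hne (h2.symm.trans hh.symm)⟩
              · exact ⟨c, e1, mem_own hP c, he1, fun hh => hce1 hh.symm,
                  fun hh => h1 hh.symm, fun hh => h2 hh.symm⟩
          have hp'c : π p' = π c := coal_eq hP hp'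
          obtain ⟨f1, hf1, f2, hf2, hf12, hfr1, hfr2⟩ :=
            R2 hw hP hR (i := p') (o := o) (o' := o')
              (by rw [hp'c]; exact ho) (by rw [hp'c]; exact ho') Hoo Hop Hop'
          rw [hp'c] at hf1 hf2
          obtain ⟨_, u0, hu0, huniq⟩ := hleaf
          have h1 := huniq f1 ⟨halivemem p' hp', halivemem f1 hf1, hfr1⟩
          have h2 := huniq f2 ⟨halivemem p' hp', halivemem f2 hf2, hfr2⟩
          exact hf12 (h1.trans h2.symm)
        exact hpq (hPC p q ⟨hcal, halivemem p hp, hfrcp⟩ (hnonleaf p hp)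
          ⟨hcal, halivemem q hq, hfrcq⟩ (hnonleaf q hq))
end PPair

section Final
variable {α : Type*} [DecidableEq α] [Fintype α] {w : α → α → ℤ} {π : α → Finset α}

lemma coalition_of_P (hw : FriendOriented w) (hP : IsPartition (univ : Finset α) π)
    (hR : Robust (CIStable w) univ π 1) {v : α} (hv : v ∈ Pset w) :
    ∃ p1 p2 : α, π v = {p1, p2} ∧ p1 ∈ Pset w ∧ p2 ∈ Pset w ∧ Friend w p1 p2 := by
  obtain ⟨i, j, ⟨L, hL, hmem⟩, hor⟩ := hv
  obtain ⟨k, hk, hgetk⟩ := List.mem_iff_getElem.mp hmem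
  have hget : L.get ⟨k, hk⟩ = (i, j) := by rw [List.get_eq_getElem]; exact hgetk
  have hpp := claimPP hw hP hR hL k hk
  rw [hget] at hpp
  obtain ⟨⟨⟨_, _, hfr'⟩, _⟩, _⟩ := hL k hk
  rw [hget] at hfr'
  have hiP : i ∈ Pset w := ⟨i, j, ⟨L, hL, hmem⟩, Or.inl rfl⟩
  have hjP : j ∈ Pset w := ⟨i, j, ⟨L, hL, hmem⟩, Or.inr rfl⟩
  refine ⟨i, j, ?_, hiP, hjP, hfr'⟩
  rcases hor with rfl | rfl
  · exact hpp
  · have hmem2 : v ∈ π i := by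
      rw [hpp]; exact Finset.mem_insert.mpr (Or.inr (Finset.mem_singleton_self _))
    rw [coal_eq hP hmem2, hpp]

theorem main_result (hw : FriendOriented w) (hP : IsPartition (univ : Finset α) π)
    (hR : Robust (CIStable w) univ π 1) :
    ∀ j ∈ Rset w, ∀ u : α, ¬ Friend w j u := by
  intro j hj u hfr
  have hjP : j ∉ Pset w := fun h => hj (Or.inl (Or.inl h))
  have hjS : j ∉ Sset w := fun h => hj (Or.inl (Or.inr h))
  have hjB : j ∉ Bset w := fun h => hj (Or.inr h)
  -- Step A: every friend of j is in Pset
  have hFP : ∀ u', Friend w j u' → u' ∈ Pset w := by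
    intro u' hfru'
    by_contra hu'P
    have h2 : ∃ u2, (u2 ∉ Pset w ∧ Friend w j u2) ∧ u2 ≠ u' := by
      by_contra hno
      push_neg at hno
      exact hjS ⟨hjP, ⟨u', ⟨hu'P, hfru'⟩, fun y hy => hno y hy⟩⟩
    obtain ⟨u2, ⟨hu2P, hfru2⟩, hu2ne⟩ := h2
    have hS : u' ∈ Sset w ∨ u2 ∈ Sset w := by
      by_contra hno
      push_neg at hno
      exact hjB ⟨u', u2, fun h => hu2ne h.symm,
        fun hm => hm.elim hu'P hno.1, fun hm => hm.elim hu2P hno.2, hfru', hfru2⟩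
    obtain ⟨s, hsS, hfrs⟩ : ∃ s, s ∈ Sset w ∧ Friend w j s := by
      rcases hS with h | h
      exacts [⟨u', h, hfru'⟩, ⟨u2, h, hfru2⟩]
    obtain ⟨LT, hLT, hnv⟩ := exists_stuck w
    have hcov := P_covered hw hLT hnv
    have hTP : ∀ v ∈ removed LT, v ∈ Pset w := fun v hv => removed_subset_Pset hLT hv
    have hsP : s ∉ Pset w := hsS.1
    have hsT : s ∉ removed LT := fun h => hsP (hTP s h)
    have hjT : j ∉ removed LT := fun h => hjP (hTP j h)
    obtain ⟨-, us, ⟨husP, husfr⟩, husq⟩ := hsS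
    have hjus : j = us := husq j ⟨hjP, friend_symm hw hfrs⟩
    have hsuniq : ∀ l, l ∉ Pset w → Friend w s l → l = j := by
      intro l hlP hfl
      exact (husq l ⟨hlP, hfl⟩).trans hjus.symm
    have halive_friend : ∀ x y, x ∉ removed LT → Friend w x y → y ∉ removed LT →
        y ∈ Pset w → False := by
      intro x y hx hfxy hy hyP
      exact hx (hcov y hyP hy x (friend_symm hw hfxy))
    apply hnv s j
    constructor
    · refine ⟨⟨hsT, hjT, friend_symm hw hfrs⟩, ?_⟩
      rintro l ⟨_, hlT, hfl⟩
      by_cases hlP : l ∈ Pset w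
      · exact (halive_friend s l hsT hfl hlT hlP).elim
      · exact hsuniq l hlP hfl
    · left
      rintro u1 u2 ⟨_, hu1T, hfr1⟩ hnl1 ⟨_, hu2T, hfr2⟩ hnl2
      have hkey : ∀ u', u' ∉ removed LT → Friend w j u' →
          ¬ LeafIn w {v | v ∉ removed LT} u' → u' ∉ Pset w ∪ Sset w := by
        intro u' hu'T hfru' hnl hmem
        rcases hmem with hP' | hS'
        · exact halive_friend j u' hjT hfru' hu'T hP'
        · apply hnl
          obtain ⟨hu'P, us', ⟨hus'P, hus'fr⟩, husq'⟩ := hS'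
          have hjus' : j = us' := husq' j ⟨hjP, friend_symm hw hfru'⟩
          refine ⟨hu'T, j, ⟨hu'T, hjT, friend_symm hw hfru'⟩, ?_⟩
          rintro l ⟨_, hlT, hfl⟩
          by_cases hlP : l ∈ Pset w
          · exact (halive_friend u' l hu'T hfl hlT hlP).elim
          · exact (husq' l ⟨hlP, hfl⟩).trans hjus'.symm
      have h1 := hkey u1 hu1T hfr1 hnl1
      have h2 := hkey u2 hu2T hfr2 hnl2
      by_contra hne
      exact hjB ⟨u1, u2, hne, h1, h2, hfr1, hfr2⟩
  -- Step B: the final contradiction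
  have huP := hFP u hfr
  obtain ⟨p1, p2, hpu, hp1P, hp2P, hfrp⟩ := coalition_of_P hw hP hR huP
  have hsing : π j = {j} := by
    apply Finset.eq_singleton_iff_unique_mem.mpr
    refine ⟨mem_own hP j, ?_⟩
    intro m hm
    by_contra hma
    obtain ⟨f, hf, hfrj⟩ := R1 hw hP hR (i := j) (o := m) hm hma
    have hfP := hFP f hfrj
    obtain ⟨q1, q2, hpf, hq1P, hq2P, _⟩ := coalition_of_P hw hP hR hfP
    have hjq : j ∈ ({q1, q2} : Finset α) := by
      rw [← hpf, coal_eq hP hf]; exact mem_own hP j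
    rcases Finset.mem_insert.mp hjq with rfl | hh
    · exact hjP hq1P
    · exact hjP ((Finset.mem_singleton.mp hh) ▸ hq2P)
  have hjnin : j ∉ π u := by
    intro hmem
    have hjq : j ∈ ({p1, p2} : Finset α) := by rw [← hpu]; exact hmem
    rcases Finset.mem_insert.mp hjq with rfl | hh
    · exact hjP hp1P
    · exact hjP ((Finset.mem_singleton.mp hh) ▸ hp2P)
  obtain ⟨e1, he1, e2, he2, hne, hen1, hen2⟩ :=
    R3 hw hP hR hsing hjnin (mem_own hP u) hfr
  rw [hpu] at he1 he2
  have h1 : e1 ≠ u := fun hh => hen1 (hh ▸ hfr)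
  have h2 : e2 ≠ u := fun hh => hen2 (hh ▸ hfr)
  have huin : u ∈ ({p1, p2} : Finset α) := by rw [← hpu]; exact mem_own hP u
  rcases Finset.mem_insert.mp huin with rfl | hh
  · have he1' : e1 = p2 := by
      rcases Finset.mem_insert.mp he1 with hq | hq
      · exact absurd hq h1
      · exact Finset.mem_singleton.mp hq
    have he2' : e2 = p2 := by
      rcases Finset.mem_insert.mp he2 with hq | hq
      · exact absurd hq h2
      · exact Finset.mem_singleton.mp hq
    exact hne (he1'.trans he2'.symm)
  · have hup2 : u = p2 := Finset.mem_singleton.mp hh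
    have he1' : e1 = p1 := by
      rcases Finset.mem_insert.mp he1 with hq | hq
      · exact hq
      · exact absurd ((Finset.mem_singleton.mp hq).trans hup2.symm) h1
    have he2' : e2 = p1 := by
      rcases Finset.mem_insert.mp he2 with hq | hq
      · exact hq
      · exact absurd ((Finset.mem_singleton.mp hq).trans hup2.symm) h2
    exact hne (he1'.trans he2'.symm)

end Final

/-- For `k = 1`, if a symmetric friend-oriented game admits a CIS-robust
partition, then every player of `R_w` is an isolated vertex of the friendship graph. -/
theorem r_players_isolated {α : Type*} [DecidableEq α] [Fintype α]
    (w : α → α → ℤ) (hw : FriendOriented w)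
    (hex : ∃ π : α → Finset α, IsPartition (Finset.univ : Finset α) π ∧
      Robust (CIStable w) Finset.univ π 1) :
    ∀ j ∈ Rset w, ∀ u : α, ¬ Friend w j u := by
  intro j hj u hfr
  obtain ⟨π, hP, hR⟩ := hex
  exact main_result hw hP hR j hj u hfr
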